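/- Lemma (F-Phi, assertions (3) and (4)): in the expansion setup, let d ≥ 1 and suppose f ∈ R[y] is monic of degree p₁p₂⋯p_{k−1}·d; let F be the unique element of R[y₁, …, y_k] with π(F) = f and deg_{y_j} F < p_j for all 1 ≤ j ≤ k−1. Then F, viewed as a polynomial in y_k with coefficients in R[y₁, …, y_{k−1}], is monic of degree d; and for every monomial y₁^{β₁}⋯y_k^{β_k} occurring with nonzero coefficient in F − y_k^d, one has Σ_{i=1}^{j} p₀p₁⋯p_{i−1}·β_i < p₁p₂⋯p_j for each 1 ≤ j ≤ k−1, and Σ_{i=1}^{k} p₀p₁⋯p_{i−1}·β_i < p₁p₂⋯p_{k−1}·d. -/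

import Mathlib

open Finset Polynomial

private lemma tele_aux (p : ℕ → ℕ) (hp0 : p 0 = 1) (b : ℕ → ℕ) :
    ∀ j, (∀ i < j, b i < p (i+1)) →
      ∑ i ∈ range j, (∏ t ∈ range (i+1), p t) * b i < ∏ t ∈ range (j+1), p t := by
  intro j
  induction j with
  | zero => intro _; simp [hp0]
  | succ j ih =>
    intro hb
    rw [Finset.sum_range_succ]
    have h1 := ih (fun i hi => hb i (by omega))
    have h2 : b j + 1 ≤ p (j+1) := hb j (by omega)
    calc ∑ i ∈ range j, (∏ t ∈ range (i+1), p t) * b i + (∏ t ∈ range (j+1), p t) * b j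
        < (∏ t ∈ range (j+1), p t) * (b j + 1) := by rw [Nat.mul_succ]; omega
      _ ≤ (∏ t ∈ range (j+1), p t) * p (j+1) := Nat.mul_le_mul_left _ h2
      _ = ∏ t ∈ range (j+1+1), p t := (Finset.prod_range_succ p (j+1)).symm

private lemma digit_unique_aux {c a a' x x' : ℕ} (hc : a < c) (hc' : a' < c)
    (h : a + c * x = a' + c * x') : a = a' ∧ x = x' := by
  have hcpos : 0 < c := by omega
  have h1 : (a + c * x) / c = x := by
    rw [Nat.add_mul_div_left _ _ hcpos, Nat.div_eq_of_lt hc]; omega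
  have h2 : (a' + c * x') / c = x' := by
    rw [Nat.add_mul_div_left _ _ hcpos, Nat.div_eq_of_lt hc']; omega
  have hx : x = x' := by rw [← h1, ← h2, h]
  subst hx
  omega

private lemma digits_unique_aux (p : ℕ → ℕ) (hp0 : p 0 = 1) (b b' : ℕ → ℕ) :
    ∀ j, (∀ i < j, b i < p (i+1)) → (∀ i < j, b' i < p (i+1)) →
      (∑ i ∈ range j, (∏ t ∈ range (i+1), p t) * b i
        = ∑ i ∈ range j, (∏ t ∈ range (i+1), p t) * b' i) →
      ∀ i < j, b i = b' i := by
  intro j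
  induction j with
  | zero => intro _ _ _ i hi; omega
  | succ j ih =>
    intro hb hb' hsum i hi
    rw [Finset.sum_range_succ, Finset.sum_range_succ] at hsum
    have t1 := tele_aux p hp0 b j (fun i hi => hb i (by omega))
    have t2 := tele_aux p hp0 b' j (fun i hi => hb' i (by omega))
    obtain ⟨heq, hdig⟩ := digit_unique_aux t1 t2 hsum
    rcases Nat.lt_or_ge i j with h | h
    · exact ih (fun i hi => hb i (by omega)) (fun i hi => hb' i (by omega)) heq i h
    · have : i = j := by omega
      subst this; exact hdig



/-- Lemma `F-Phi`, assertions (3) and (4): in the expansion setup, if `g ∈ R[y]` is monic of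
degree `p₁p₂⋯p_{k-1}·d` with `d ≥ 1`, and `F` is the canonical pre-image of `g`
(`π F = g` and `deg_{y_j} F < p_j` for `1 ≤ j ≤ k-1`), then `F`, viewed as a polynomial in
`y_k`, is monic of degree `d` (its coefficient on the monomial `y_k^d` is `1` and its degree
in `y_k` is `d`), and every monomial `y₁^{β₁}⋯y_k^{β_k}` occurring in `F − y_k^d` satisfies
`Σ_{i=1}^{j} p₀p₁⋯p_{i-1}·β_i < p₁p₂⋯p_j` for each `1 ≤ j ≤ k-1` and
`Σ_{i=1}^{k} p₀p₁⋯p_{i-1}·β_i < p₁p₂⋯p_{k-1}·d`.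
(Variables are indexed by `Fin k`, variable `i` standing for `y_{i+1}`.) -/
theorem canonical_preimage_monic_and_weighted_bounds {R : Type*} [CommRing R]
    (k : ℕ) (hk : 1 ≤ k)
    (p : ℕ → ℕ) (hp0 : p 0 = 1) (hp : ∀ i, 1 ≤ i → i ≤ k - 1 → 0 < p i)
    (f : Fin k → Polynomial R)
    (hmonic : ∀ i, (f i).Monic)
    (hdeg : ∀ i : Fin k, (f i).natDegree = ∏ t ∈ Finset.range (i.1 + 1), p t)
    (d : ℕ) (hd : 1 ≤ d)
    (g : Polynomial R) (hgmonic : g.Monic)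
    (hgdeg : g.natDegree = (∏ t ∈ Finset.Icc 1 (k - 1), p t) * d)
    (F : MvPolynomial (Fin k) R)
    (hF : MvPolynomial.aeval f F = g)
    (hFdeg : ∀ i : Fin k, i.1 + 1 ≤ k - 1 → MvPolynomial.degreeOf i F < p (i.1 + 1)) :
    MvPolynomial.coeff (Finsupp.single (⟨k - 1, by omega⟩ : Fin k) d) F = 1 ∧
    MvPolynomial.degreeOf (⟨k - 1, by omega⟩ : Fin k) F = d ∧
    ∀ β ∈ (F - MvPolynomial.monomial
        (Finsupp.single (⟨k - 1, by omega⟩ : Fin k) d) (1 : R)).support,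
      (∀ j, 1 ≤ j → j ≤ k - 1 →
        (∑ i : Fin k, if i.1 < j then (∏ t ∈ Finset.range (i.1 + 1), p t) * β i else 0)
          < ∏ t ∈ Finset.Icc 1 j, p t) ∧
      (∑ i : Fin k, (∏ t ∈ Finset.range (i.1 + 1), p t) * β i)
          < (∏ t ∈ Finset.Icc 1 (k - 1), p t) * d := by
  obtain ⟨k', rfl⟩ : ∃ k', k = k' + 1 := ⟨k - 1, by omega⟩
  simp only [Nat.add_sub_cancel] at hp hgdeg hFdeg ⊢
  set c : ℕ → ℕ := fun i => ∏ t ∈ range (i+1), p t with hc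
  set w : (Fin (k'+1) →₀ ℕ) → ℕ := fun β => ∑ i : Fin (k'+1), c i.1 * β i with hwdef
  set m : Fin (k'+1) := ⟨k', by omega⟩ with hm
  set bfun : (Fin (k'+1) →₀ ℕ) → ℕ → ℕ :=
    fun β i => if h : i < k' + 1 then β ⟨i, h⟩ else 0 with hbfun
  -- product over Icc vs range
  have hPj : ∀ j, ∏ t ∈ range (j+1), p t = ∏ t ∈ Icc 1 j, p t := by
    intro j
    rw [Finset.prod_range_succ', hp0, mul_one, ← Finset.Ico_add_one_right_eq_Icc,
      Finset.prod_Ico_eq_prod_range]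
    exact Finset.prod_congr rfl fun i _ => by rw [add_comm]
  have hP : c k' = ∏ t ∈ Icc 1 k', p t := hPj k'
  have hPpos : 0 < ∏ t ∈ Icc 1 k', p t := by
    apply Finset.prod_pos
    intro t ht
    rw [Finset.mem_Icc] at ht
    exact hp t ht.1 ht.2
  have hcpos : 0 < c k' := hP ▸ hPpos
  -- Nontrivial R
  have hntr : Nontrivial R := by
    rcases subsingleton_or_nontrivial R with h | h
    · exfalso
      have hg0 : g = 0 := Subsingleton.elim _ _
      rw [hg0, Polynomial.natDegree_zero] at hgdeg
      have := Nat.mul_pos hPpos hd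
      omega
    · exact h
  -- sums over Fin vs range
  have hw : ∀ β : Fin (k'+1) →₀ ℕ, w β = ∑ i ∈ range (k'+1), c i * bfun β i := by
    intro β
    rw [hwdef, ← Fin.sum_univ_eq_sum_range (fun i => c i * bfun β i) (k'+1)]
    refine Finset.sum_congr rfl fun i _ => ?_
    simp only [hbfun, i.isLt, dif_pos, Fin.eta]
  -- digit bounds for support elements
  have hsupp : ∀ β ∈ F.support, ∀ i : Fin (k'+1), i.1 + 1 ≤ k' → β i < p (i.1+1) := by
    intro β hβ i hi
    have hpos : 0 < p (i.1+1) := lt_of_le_of_lt (Nat.zero_le _) (hFdeg i hi)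
    exact (MvPolynomial.degreeOf_lt_iff hpos).mp (hFdeg i hi) β hβ
  have hbb : ∀ β : Fin (k'+1) →₀ ℕ,
      (∀ i : Fin (k'+1), i.1 + 1 ≤ k' → β i < p (i.1+1)) →
      ∀ i < k', bfun β i < p (i+1) := by
    intro β hβ i hi
    have h1 : i < k' + 1 := by omega
    simpa only [hbfun, dif_pos h1] using hβ ⟨i, h1⟩ (by simpa using hi)
  -- injectivity of weight on constrained multi-indices
  have hinj : ∀ β γ : Fin (k'+1) →₀ ℕ,
      (∀ i : Fin (k'+1), i.1 + 1 ≤ k' → β i < p (i.1+1)) →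
      (∀ i : Fin (k'+1), i.1 + 1 ≤ k' → γ i < p (i.1+1)) →
      w β = w γ → β = γ := by
    intro β γ hβ hγ hwe
    rw [hw β, hw γ, Finset.sum_range_succ, Finset.sum_range_succ] at hwe
    have t1 := tele_aux p hp0 (bfun β) k' (hbb β hβ)
    have t2 := tele_aux p hp0 (bfun γ) k' (hbb γ hγ)
    obtain ⟨heq, hdig⟩ := digit_unique_aux t1 t2 hwe
    have hrest := digits_unique_aux p hp0 (bfun β) (bfun γ) k' (hbb β hβ) (hbb γ hγ) heq
    ext i
    rcases Nat.lt_or_ge i.1 k' with h | h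
    · have := hrest i.1 h
      simpa only [hbfun, i.isLt, dif_pos, Fin.eta] using this
    · have hik : i = m := by
        apply Fin.ext; simp only [hm]; omega
      subst hik
      simpa only [hbfun, dif_pos (by omega : k' < k' + 1)] using hdig
  -- the products Q β
  have hQmonic : ∀ β : Fin (k'+1) →₀ ℕ, (∏ i, f i ^ β i).Monic := fun β =>
    Polynomial.monic_prod_of_monic _ _ fun i _ => (hmonic i).pow _
  have hQdeg : ∀ β : Fin (k'+1) →₀ ℕ, (∏ i, f i ^ β i).natDegree = w β := by
    intro β
    rw [Polynomial.natDegree_prod_of_monic _ _ fun i _ => (hmonic i).pow _]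
    refine Finset.sum_congr rfl fun i _ => ?_
    rw [(hmonic i).natDegree_pow, hdeg i, mul_comm]
  have hQcoeff : ∀ β : Fin (k'+1) →₀ ℕ, (∏ i, f i ^ β i).coeff (w β) = 1 := by
    intro β
    have := (hQmonic β).coeff_natDegree
    rwa [hQdeg β] at this
  have hQzero : ∀ (β : Fin (k'+1) →₀ ℕ) (n : ℕ), w β < n → (∏ i, f i ^ β i).coeff n = 0 := by
    intro β n hn
    exact Polynomial.coeff_eq_zero_of_natDegree_lt (by rw [hQdeg]; exact hn)
  -- coefficient formula
  have hg : ∀ n, g.coeff n = ∑ β ∈ F.support, F.coeff β * (∏ i, f i ^ β i).coeff n := by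
    intro n
    conv_lhs => rw [← hF, ← MvPolynomial.support_sum_monomial_coeff F]
    rw [map_sum, Polynomial.finset_sum_coeff]
    refine Finset.sum_congr rfl fun β _ => ?_
    rw [MvPolynomial.aeval_monomial, Finsupp.prod_fintype _ _ (fun i => pow_zero (f i))]
    rw [Polynomial.algebraMap_eq, Polynomial.coeff_C_mul]
  -- all weights bounded by g.natDegree
  have hwle : ∀ β ∈ F.support, w β ≤ (∏ t ∈ Icc 1 k', p t) * d := by
    intro β hβ
    have hne : (F.support.image w).Nonempty := ⟨w β, Finset.mem_image_of_mem w hβ⟩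
    obtain ⟨β₀, hβ₀, hwβ₀⟩ := Finset.mem_image.mp ((F.support.image w).max'_mem hne)
    have hle : ∀ γ ∈ F.support, w γ ≤ w β₀ := fun γ hγ =>
      hwβ₀ ▸ Finset.le_max' _ _ (Finset.mem_image_of_mem w hγ)
    have hgM : g.coeff (w β₀) = F.coeff β₀ := by
      rw [hg (w β₀), Finset.sum_eq_single_of_mem β₀ hβ₀]
      · rw [hQcoeff, mul_one]
      · intro γ hγ hne2
        have h1 : w γ ≠ w β₀ := fun h =>
          hne2 (hinj γ β₀ (hsupp γ hγ) (hsupp β₀ hβ₀) h)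
        have h2 : w γ < w β₀ := lt_of_le_of_ne (hle γ hγ) h1
        rw [hQzero γ _ h2, mul_zero]
    have hgMne : g.coeff (w β₀) ≠ 0 := by
      rw [hgM]; exact MvPolynomial.mem_support_iff.mp hβ₀
    have := Polynomial.le_natDegree_of_ne_zero hgMne
    rw [hgdeg] at this
    exact le_trans (hle β hβ) this
  -- weight of the top monomial
  have htopw : w (Finsupp.single m d) = (∏ t ∈ Icc 1 k', p t) * d := by
    show (∑ i : Fin (k'+1), c i.1 * (Finsupp.single m d) i) = _
    rw [Finset.sum_eq_single m]
    · rw [Finsupp.single_apply, if_pos rfl, hP]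
    · intro i _ hne
      rw [Finsupp.single_apply, if_neg (fun h => hne h.symm), mul_zero]
    · intro h; exact absurd (Finset.mem_univ m) h
  have htopconstr : ∀ i : Fin (k'+1), i.1 + 1 ≤ k' →
      (Finsupp.single m d) i < p (i.1+1) := by
    intro i hi
    have hne : m ≠ i := by
      intro h; rw [← h] at hi; simp only [hm] at hi; omega
    rw [Finsupp.single_apply, if_neg hne]
    exact hp _ (by omega) (by omega)
  -- coefficient of top monomial is 1
  have hcoefftop : F.coeff (Finsupp.single m d) = 1 := by
    have h1 : g.coeff ((∏ t ∈ Icc 1 k', p t) * d) = 1 := by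
      rw [← hgdeg]; exact hgmonic.coeff_natDegree
    rw [hg] at h1
    rw [Finset.sum_eq_single (Finsupp.single m d)] at h1
    · rwa [← htopw, hQcoeff, mul_one] at h1
    · intro γ hγ hne2
      have h2 : w γ ≠ (∏ t ∈ Icc 1 k', p t) * d := fun h =>
        hne2 (hinj γ _ (hsupp γ hγ) htopconstr (by rw [h, htopw]))
      have h3 : w γ < (∏ t ∈ Icc 1 k', p t) * d := lt_of_le_of_ne (hwle γ hγ) h2
      rw [hQzero γ _ h3, mul_zero]
    · intro h
      rw [MvPolynomial.notMem_support_iff.mp h, zero_mul]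
  have htopmem : Finsupp.single m d ∈ F.support :=
    MvPolynomial.mem_support_iff.mpr (by rw [hcoefftop]; exact one_ne_zero)
  refine ⟨hcoefftop, ?_, ?_⟩
  · -- degreeOf m F = d
    have hub : ∀ β ∈ F.support, β m ≤ d := by
      intro β hβ
      have h1 : c k' * β m ≤ w β := by
        rw [hwdef]
        exact Finset.single_le_sum (f := fun i => c i.1 * β i)
          (fun i _ => Nat.zero_le _) (Finset.mem_univ m)
      have h2 := hwle β hβ
      rw [← hP] at h2
      have : c k' * β m ≤ c k' * d := le_trans h1 h2
      exact Nat.le_of_mul_le_mul_left this hcpos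
    have h1 : MvPolynomial.degreeOf m F < d + 1 :=
      (MvPolynomial.degreeOf_lt_iff (by omega)).mpr fun β hβ => by
        have := hub β hβ; omega
    have h2 : ¬ MvPolynomial.degreeOf m F < d := by
      intro h
      have := (MvPolynomial.degreeOf_lt_iff (by omega : 0 < d)).mp h _ htopmem
      rw [Finsupp.single_apply, if_pos rfl] at this
      omega
    omega
  · -- the weighted bounds
    intro β hβ
    have hβ' : β ∈ F.support ∧ β ≠ Finsupp.single m d := by
      rw [MvPolynomial.mem_support_iff, MvPolynomial.coeff_sub,
        MvPolynomial.coeff_monomial] at hβ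
      by_cases h : Finsupp.single m d = β
      · rw [if_pos h, ← h, hcoefftop, sub_self] at hβ
        exact absurd rfl hβ
      · rw [if_neg h, sub_zero] at hβ
        exact ⟨MvPolynomial.mem_support_iff.mpr hβ, fun h2 => h h2.symm⟩
    obtain ⟨hβS, hβne⟩ := hβ'
    constructor
    · intro j hj1 hj2
      have step1 : (∑ i : Fin (k'+1), if i.1 < j then c i.1 * β i else 0)
          = ∑ i ∈ range (k'+1), (if i < j then c i * bfun β i else 0) := by
        rw [← Fin.sum_univ_eq_sum_range (fun i => if i < j then c i * bfun β i else 0) (k'+1)]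
        refine Finset.sum_congr rfl fun i _ => ?_
        simp only [hbfun, i.isLt, dif_pos, Fin.eta]
      have step2 : (∑ i ∈ range (k'+1), (if i < j then c i * bfun β i else 0))
          = ∑ i ∈ range j, c i * bfun β i := by
        rw [← Finset.sum_subset (Finset.range_subset_range.mpr (show j ≤ k'+1 by omega))
          (fun i _ hi => if_neg (fun hlt => hi (Finset.mem_range.mpr hlt)))]
        exact Finset.sum_congr rfl fun i hi => if_pos (Finset.mem_range.mp hi)
      have hlt := tele_aux p hp0 (bfun β) j
        (fun i hi => hbb β (hsupp β hβS) i (by omega))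
      rw [hPj j] at hlt
      calc (∑ i : Fin (k'+1), if i.1 < j then c i.1 * β i else 0)
          = ∑ i ∈ range j, c i * bfun β i := step1.trans step2
        _ < ∏ t ∈ Icc 1 j, p t := hlt
    · have h2 : w β ≠ (∏ t ∈ Icc 1 k', p t) * d := fun h =>
        hβne (hinj β _ (hsupp β hβS) htopconstr (by rw [h, htopw]))
      exact lt_of_le_of_ne (hwle β hβS) h2
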